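/- Let K be an algebraically closed field and g ≥ 1, r ≥ 0, s ≥ 0 integers. If F ∈ R_{g,r} is a nonzero SL_g-invariant polynomial that is homogeneous of degree s, then g divides 2s. -/

import Mathlib

/-!
Setting: `R_{g,m-1}` is the polynomial ring over `K` in the variables `T^(l)_{ij}`,
`0 ≤ l ≤ m-1`, `1 ≤ i ≤ j ≤ g`, the entries of `m` generic symmetric `g × g` matrices,
with `SL_g` acting by congruence `T^(l) ↦ Λ · T^(l) · Λᵗ`.
-/

open Matrix

noncomputable section

/-- The index set of the entries `(i, j)`, `i ≤ j`, of a symmetric `g × g` matrix. -/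
abbrev SymIdx (g : ℕ) : Type := {p : Fin g × Fin g // p.1 ≤ p.2}

/-- A scalar matrix viewed as a matrix of constant polynomials. -/
def mapC (K : Type*) [CommRing K] (σ : Type*) {g : ℕ} (Λ : Matrix (Fin g) (Fin g) K) :
    Matrix (Fin g) (Fin g) (MvPolynomial σ K) :=
  Λ.map fun a => MvPolynomial.C a

/-- The `l`-th generic symmetric matrix `T^(l)` (`0 ≤ l ≤ m-1`), a symmetric matrix whose
entries are the variables `T^(l)_{ij}`, with the convention `T^(l)_{ji} = T^(l)_{ij}`. -/
def genSym (K : Type*) [CommRing K] (g m : ℕ) (l : Fin m) :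
    Matrix (Fin g) (Fin g) (MvPolynomial (Fin m × SymIdx g) K) :=
  Matrix.of fun i j =>
    if h : i ≤ j then MvPolynomial.X (l, ⟨(i, j), h⟩)
    else MvPolynomial.X (l, ⟨(j, i), le_of_not_ge h⟩)

/-- The `K`-algebra endomorphism sending each variable `T^(l)_{ij}` to the `(i,j)` entry of
`Λ · T^(l) · Λᵗ`. -/
def symAct (K : Type*) [CommRing K] (g m : ℕ) (Λ : Matrix (Fin g) (Fin g) K) :
    MvPolynomial (Fin m × SymIdx g) K →ₐ[K] MvPolynomial (Fin m × SymIdx g) K :=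
  MvPolynomial.aeval fun v : Fin m × SymIdx g =>
    (mapC K (Fin m × SymIdx g) Λ * genSym K g m v.1 *
      (mapC K (Fin m × SymIdx g) Λ)ᵀ) v.2.1.1 v.2.1.2

/-- The `K`-subalgebra of `SL_g`-invariant polynomials. -/
def symInvariants (K : Type*) [Field K] (g m : ℕ) :
    Subalgebra K (MvPolynomial (Fin m × SymIdx g) K) :=
  ⨅ Λ : SpecialLinearGroup (Fin g) K,
    AlgHom.equalizer (symAct K g m (Λ : Matrix (Fin g) (Fin g) K)) (AlgHom.id K _)

open MvPolynomial in
lemma aeval_scale_monomial {σ K : Type*} [CommSemiring K] (c : σ → K) (ν : σ →₀ ℕ) (a : K) :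
    aeval (fun v => C (c v) * X v : σ → MvPolynomial σ K) (monomial ν a)
      = monomial ν (a * ν.prod fun v e => c v ^ e) := by
  rw [aeval_monomial, monomial_eq]
  simp only [Finsupp.prod, mul_pow, ← C_pow, Finset.prod_mul_distrib, ← map_prod]
  rw [algebraMap_eq, C_mul]
  ring

open MvPolynomial in
lemma coeff_aeval_scale {σ K : Type*} [CommSemiring K] (c : σ → K)
    (F : MvPolynomial σ K) (μ : σ →₀ ℕ) :
    coeff μ (aeval (fun v => C (c v) * X v : σ → MvPolynomial σ K) F)
      = (μ.prod fun v e => c v ^ e) * coeff μ F := by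
  classical
  conv_lhs => rw [F.as_sum, map_sum]
  rw [coeff_sum]
  simp only [aeval_scale_monomial]
  rw [Finset.sum_eq_single μ]
  · by_cases h : μ ∈ F.support
    · simp [MvPolynomial.coeff_monomial, mul_comm]
    · simp [MvPolynomial.coeff_monomial, MvPolynomial.notMem_support_iff.mp h]
  · intro b _ hb; simp [MvPolynomial.coeff_monomial, hb]
  · intro h
    simp [MvPolynomial.coeff_monomial, MvPolynomial.notMem_support_iff.mp h]

open MvPolynomial in
lemma symAct_diagonal (K : Type*) [CommRing K] (g m : ℕ) (d : Fin g → K) :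
    symAct K g m (Matrix.diagonal d)
      = aeval (fun v : Fin m × SymIdx g => C (d v.2.1.1 * d v.2.1.2) * X v) := by
  unfold symAct
  congr 1
  funext v
  obtain ⟨l, ⟨⟨a, b⟩, hab⟩⟩ := v
  have hC : mapC K (Fin m × SymIdx g) (Matrix.diagonal d)
      = Matrix.diagonal fun k => (C (d k) : MvPolynomial (Fin m × SymIdx g) K) := by
    unfold mapC
    rw [Matrix.diagonal_map (map_zero _)]
  rw [hC, Matrix.diagonal_transpose, Matrix.mul_diagonal, Matrix.diagonal_mul]
  have hgen : genSym K g m l a b = X (l, ⟨(a, b), hab⟩) := by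
    unfold genSym
    rw [Matrix.of_apply, dif_pos hab]
  rw [hgen, C_mul]
  ring

/-- Multiplicity of the index `k` in the variable `v = (l, (i,j))`. -/
def cnt {g m : ℕ} (k : Fin g) (v : Fin m × SymIdx g) : ℕ :=
  (if v.2.1.1 = k then 1 else 0) + (if v.2.1.2 = k then 1 else 0)

lemma prod_pair_pow {M : Type*} [CommMonoid M] {g m : ℕ}
    (δ : Fin g → M) (μ : (Fin m × SymIdx g) →₀ ℕ) :
    (μ.prod fun v e => (δ v.2.1.1 * δ v.2.1.2) ^ e)
      = ∏ k : Fin g, δ k ^ (∑ v ∈ μ.support, cnt k v * μ v) := by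
  have h1 : ∀ v : Fin m × SymIdx g, δ v.2.1.1 * δ v.2.1.2 = ∏ k : Fin g, δ k ^ cnt k v := by
    intro v
    simp only [cnt, pow_add, Finset.prod_mul_distrib]
    congr 1 <;>
    · rw [Finset.prod_congr rfl (fun k _ => by rw [pow_ite, pow_one, pow_zero])]
      simp
  unfold Finsupp.prod
  calc ∏ v ∈ μ.support, (δ v.2.1.1 * δ v.2.1.2) ^ μ v
      = ∏ v ∈ μ.support, ∏ k : Fin g, δ k ^ (cnt k v * μ v) := by
        refine Finset.prod_congr rfl fun v _ => ?_
        rw [h1 v, ← Finset.prod_pow]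
        exact Finset.prod_congr rfl fun k _ => (pow_mul _ _ _).symm
    _ = ∏ k : Fin g, ∏ v ∈ μ.support, δ k ^ (cnt k v * μ v) := Finset.prod_comm
    _ = ∏ k : Fin g, δ k ^ ∑ v ∈ μ.support, cnt k v * μ v :=
        Finset.prod_congr rfl fun k _ => Finset.prod_pow_eq_pow_sum _ _ _

/-- Let `K` be algebraically closed, `g ≥ 1`, `r, s ≥ 0`.  If `F` is a nonzero
`SL_g`-invariant polynomial which is homogeneous of degree `s`, then `g` divides `2s`. -/
theorem stmt9 (K : Type*) [Field K] [IsAlgClosed K] (g r s : ℕ) (hg : 1 ≤ g)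
    (F : MvPolynomial (Fin (r + 1) × SymIdx g) K) (hF : F ≠ 0)
    (hinv : ∀ Λ : SpecialLinearGroup (Fin g) K,
      symAct K g (r + 1) (Λ : Matrix (Fin g) (Fin g) K) F = F)
    (hhom : F.IsHomogeneous s) : g ∣ 2 * s := by
  classical
  obtain ⟨μ, hμ⟩ := (MvPolynomial.support_nonempty.mpr hF)
  have hc : MvPolynomial.coeff μ F ≠ 0 := MvPolynomial.mem_support_iff.mp hμ
  set w : Fin g → ℕ := fun k => ∑ v ∈ μ.support, cnt k v * μ v with hw
  -- invariance under diagonal matrices with determinant one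
  have key : ∀ d : Fin g → K, (∏ k, d k) = 1 → (∏ k, d k ^ w k) = 1 := by
    intro d hd
    have hdet : Matrix.det (Matrix.diagonal d) = 1 := by rw [Matrix.det_diagonal]; exact hd
    have hΛ := hinv ⟨Matrix.diagonal d, hdet⟩
    have hcoe : ((⟨Matrix.diagonal d, hdet⟩ : Matrix.SpecialLinearGroup (Fin g) K) :
        Matrix (Fin g) (Fin g) K) = Matrix.diagonal d := rfl
    rw [hcoe, symAct_diagonal] at hΛ
    have h2 := congrArg (MvPolynomial.coeff μ) hΛ
    rw [coeff_aeval_scale, prod_pair_pow] at h2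
    exact mul_right_cancel₀ hc (h2.trans (one_mul (MvPolynomial.coeff μ F)).symm)
  -- all the weights are equal
  have hww : ∀ i j : Fin g, w i = w j := by
    intro i j
    by_cases hij : i = j
    · rw [hij]
    have ht : ∀ t : K, t ^ (w i + 1) = t ^ (w j + 1) := by
      intro t
      by_cases h0 : t = 0
      · simp [h0, pow_succ]
      set d : Fin g → K := fun k =>
        t ^ (if k = i then (1 : ℕ) else 0) * t⁻¹ ^ (if k = j then (1 : ℕ) else 0) with hdd
      have hprod : (∏ k, d k) = 1 := by
        simp only [hdd, Finset.prod_mul_distrib, Finset.prod_pow_eq_pow_sum]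
        simp [Finset.sum_ite_eq', h0]
      have hKey := key d hprod
      have hval : (∏ k, d k ^ w k) = t ^ w i * t⁻¹ ^ w j := by
        simp only [hdd, mul_pow, ← pow_mul, Finset.prod_mul_distrib,
          Finset.prod_pow_eq_pow_sum]
        congr 1
        · congr 1
          rw [Finset.sum_congr rfl fun k _ => by rw [ite_mul, one_mul, zero_mul]]
          simp
        · congr 1
          rw [Finset.sum_congr rfl fun k _ => by rw [ite_mul, one_mul, zero_mul]]
          simp
      rw [hval] at hKey
      have : t ^ w i = t ^ w j := by
        rw [inv_pow] at hKey
        exact (mul_inv_eq_one₀ (pow_ne_zero _ h0)).mp hKey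
      rw [pow_succ, pow_succ, this]
    have hpoly : (Polynomial.X ^ (w i + 1) : Polynomial K) = Polynomial.X ^ (w j + 1) := by
      apply Polynomial.funext
      intro t
      simp [ht t]
    have := congrArg Polynomial.natDegree hpoly
    simpa using this
  -- the sum of the weights is 2 s
  have hdeg : ∑ v ∈ μ.support, μ v = s := by
    have := hhom hc
    simpa [Finsupp.weight_apply, Finsupp.sum] using this
  have hsum : ∑ k, w k = 2 * s := by
    rw [hw]
    rw [Finset.sum_comm]
    calc ∑ v ∈ μ.support, ∑ k : Fin g, cnt k v * μ v
        = ∑ v ∈ μ.support, 2 * μ v := by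
          refine Finset.sum_congr rfl fun v _ => ?_
          rw [← Finset.sum_mul]
          congr 1
          simp [cnt, Finset.sum_add_distrib, Finset.sum_ite_eq']
      _ = 2 * s := by rw [← Finset.mul_sum, hdeg]
  -- conclude
  set i0 : Fin g := ⟨0, hg⟩
  have : ∑ k, w k = g * w i0 := by
    rw [Finset.sum_congr rfl fun k _ => hww k i0]
    simp [mul_comm]
  exact ⟨w i0, by rw [← hsum, this]⟩
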